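/- arXiv:1312.6102 — 4 statements merged into one kernel-verified Lean document; each statement's English description precedes it below -/
import Mathlib

section
/- With the setup of the previous statement, the support function of Θ₀ = {E[m·l] : m_L ≤ m ≤ m_U P-a.s.} satisfies υ(p, Θ₀) = E[1{⟨p,l⟩ ≤ 0} m_L ⟨p,l⟩] + E[1{⟨p,l⟩ > 0} m_U ⟨p,l⟩] for every p ∈ ℝ^ℓ, and the point θ*(p) = E[m_p · l] lies in Θ₀ with ⟨p, θ*(p)⟩ = υ(p, Θ₀). -/
open MeasureTheory

/-- The sign-switching selection `m_p`. -/
noncomputable def mSwitch {Ω : Type*} {ℓ : ℕ} (l : Ω → EuclideanSpace ℝ (Fin ℓ))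
    (mL mU : Ω → ℝ) (p : EuclideanSpace ℝ (Fin ℓ)) (ω : Ω) : ℝ :=
  if (inner ℝ p (l ω) : ℝ) ≤ 0 then mL ω else mU ω

/-- The identified set. -/
def ThetaSet {Ω : Type*} [MeasurableSpace Ω] (P : Measure Ω) {ℓ : ℕ}
    (l : Ω → EuclideanSpace ℝ (Fin ℓ)) (mL mU : Ω → ℝ) :
    Set (EuclideanSpace ℝ (Fin ℓ)) :=
  {θ | ∃ m : Ω → ℝ, Measurable m ∧ (∀ᵐ ω ∂P, mL ω ≤ m ω ∧ m ω ≤ mU ω) ∧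
    θ = ∫ ω, m ω • l ω ∂P}

/-- Support-function formula for the identified set and attainment by the
extreme point `θ*(p) = E[m_p · l]`. -/
theorem stmt4 {Ω : Type*} [MeasurableSpace Ω] (P : Measure Ω) [IsProbabilityMeasure P]
    {ℓ : ℕ} (l : Ω → EuclideanSpace ℝ (Fin ℓ)) (hl : Integrable l P)
    (mL mU : Ω → ℝ) (hmL : Measurable mL) (hmU : Measurable mU)
    (hle : ∀ᵐ ω ∂P, mL ω ≤ mU ω)
    (hbdd : ∃ C : ℝ, ∀ ω, |mL ω| ≤ C ∧ |mU ω| ≤ C)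
    (p : EuclideanSpace ℝ (Fin ℓ)) :
    sSup ((fun θ => (inner ℝ p θ : ℝ)) '' ThetaSet P l mL mU) =
      (∫ ω, (if (inner ℝ p (l ω) : ℝ) ≤ 0 then mL ω else 0) * (inner ℝ p (l ω) : ℝ) ∂P) +
      (∫ ω, (if 0 < (inner ℝ p (l ω) : ℝ) then mU ω else 0) * (inner ℝ p (l ω) : ℝ) ∂P) ∧
    (∫ ω, mSwitch l mL mU p ω • l ω ∂P) ∈ ThetaSet P l mL mU ∧
    (inner ℝ p (∫ ω, mSwitch l mL mU p ω • l ω ∂P) : ℝ) =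
      sSup ((fun θ => (inner ℝ p θ : ℝ)) '' ThetaSet P l mL mU) := by
  obtain ⟨C, hC⟩ := hbdd
  have hne : Nonempty Ω := by
    by_contra h
    have : P Set.univ = 0 := by
      simp [Set.univ_eq_empty_iff.mpr (not_nonempty_iff.mp h)]
    simp [measure_univ] at this
  have hC0 : 0 ≤ C := (abs_nonneg _).trans (hC hne.some).1
  have hlm := hl.aestronglyMeasurable
  set l' := hlm.mk l with hl'def
  have hl'm : Measurable l' := hlm.stronglyMeasurable_mk.measurable
  have hll' : l =ᵐ[P] l' := hlm.ae_eq_mk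
  have hx'm : Measurable (fun ω => (inner ℝ p (l' ω) : ℝ)) :=
    measurable_const.inner hl'm
  have hxx' : (fun ω => (inner ℝ p (l ω) : ℝ)) =ᵐ[P] (fun ω => (inner ℝ p (l' ω) : ℝ)) := by
    filter_upwards [hll'] with ω h; rw [h]
  have hxint : Integrable (fun ω => (inner ℝ p (l ω) : ℝ)) P := hl.const_inner p
  -- a.e.-strong measurability of switch-type coefficients
  have hsw : ∀ a b : Ω → ℝ, Measurable a → Measurable b →
      AEStronglyMeasurable (fun ω => if (inner ℝ p (l ω) : ℝ) ≤ 0 then a ω else b ω) P := by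
    intro a b ha hb
    refine ⟨fun ω => if (inner ℝ p (l' ω) : ℝ) ≤ 0 then a ω else b ω,
      (Measurable.ite (measurableSet_le hx'm measurable_const) ha hb).stronglyMeasurable, ?_⟩
    filter_upwards [hxx'] with ω h; rw [h]
  -- integrability of bounded coefficient times ⟨p, l⟩
  have hmul : ∀ f : Ω → ℝ, AEStronglyMeasurable f P → (∀ᵐ ω ∂P, |f ω| ≤ C) →
      Integrable (fun ω => f ω * (inner ℝ p (l ω) : ℝ)) P := by
    intro f hf hfC
    refine Integrable.mono' (hxint.norm.const_mul C) (hf.mul hxint.aestronglyMeasurable) ?_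
    filter_upwards [hfC] with ω h
    rw [norm_mul]
    exact mul_le_mul_of_nonneg_right (by simpa using h) (norm_nonneg _)
  -- integrability of bounded coefficient • l
  have hsmul : ∀ f : Ω → ℝ, AEStronglyMeasurable f P → (∀ᵐ ω ∂P, |f ω| ≤ C) →
      Integrable (fun ω => f ω • l ω) P := by
    intro f hf hfC
    refine Integrable.mono' (hl.norm.const_mul C) (hf.smul hlm) ?_
    filter_upwards [hfC] with ω h
    rw [norm_smul]
    exact mul_le_mul_of_nonneg_right (by simpa using h) (norm_nonneg _)
  have hswC : ∀ᵐ ω ∂P, |mSwitch l mL mU p ω| ≤ C := by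
    filter_upwards with ω
    unfold mSwitch; split
    · exact (hC ω).1
    · exact (hC ω).2
  have hswm : AEStronglyMeasurable (mSwitch l mL mU p) P := hsw mL mU hmL hmU
  have hθint : Integrable (fun ω => mSwitch l mL mU p ω • l ω) P := hsmul _ hswm hswC
  -- inner of the integral
  have hinner : ∀ f : Ω → ℝ, Integrable (fun ω => f ω • l ω) P →
      (inner ℝ p (∫ ω, f ω • l ω ∂P) : ℝ) = ∫ ω, f ω * (inner ℝ p (l ω) : ℝ) ∂P := by
    intro f hf
    have h := (innerSL ℝ p).integral_comp_comm hf
    simp only [innerSL_apply_apply] at h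
    rw [← h]
    exact integral_congr_ae (Filter.Eventually.of_forall fun ω => real_inner_smul_right _ _ _)
  set S : ℝ := ∫ ω, mSwitch l mL mU p ω * (inner ℝ p (l ω) : ℝ) ∂P with hSdef
  -- upper bound
  have hub : ∀ θ ∈ ThetaSet P l mL mU, (inner ℝ p θ : ℝ) ≤ S := by
    rintro θ ⟨m, hm, hmb, rfl⟩
    have hmC : ∀ᵐ ω ∂P, |m ω| ≤ C := by
      filter_upwards [hmb] with ω hω
      rw [abs_le]
      exact ⟨(abs_le.mp (hC ω).1).1.trans hω.1, hω.2.trans (abs_le.mp (hC ω).2).2⟩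
    rw [hinner m (hsmul m hm.aestronglyMeasurable hmC)]
    refine integral_mono_ae (hmul m hm.aestronglyMeasurable hmC) (hmul _ hswm hswC) ?_
    filter_upwards [hmb] with ω hω
    unfold mSwitch
    by_cases h : (inner ℝ p (l ω) : ℝ) ≤ 0
    · rw [if_pos h]; exact mul_le_mul_of_nonpos_right hω.1 h
    · rw [if_neg h]; exact mul_le_mul_of_nonneg_right hω.2 (le_of_not_ge h)
  -- membership of the extreme point
  have hmem : (∫ ω, mSwitch l mL mU p ω • l ω ∂P) ∈ ThetaSet P l mL mU := by
    refine ⟨fun ω => if (inner ℝ p (l' ω) : ℝ) ≤ 0 then mL ω else mU ω,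
      Measurable.ite (measurableSet_le hx'm measurable_const) hmL hmU, ?_, ?_⟩
    · filter_upwards [hle] with ω h
      split
      · exact ⟨le_rfl, h⟩
      · exact ⟨h, le_rfl⟩
    · refine integral_congr_ae ?_
      filter_upwards [hxx'] with ω h
      unfold mSwitch; rw [h]
  have hval : (inner ℝ p (∫ ω, mSwitch l mL mU p ω • l ω ∂P) : ℝ) = S := hinner _ hθint
  have hsup : sSup ((fun θ => (inner ℝ p θ : ℝ)) '' ThetaSet P l mL mU) = S := by
    apply le_antisymm
    · refine csSup_le ⟨_, Set.mem_image_of_mem _ hmem⟩ ?_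
      rintro y ⟨θ, hθ, rfl⟩; exact hub θ hθ
    · rw [← hval]
      refine le_csSup ⟨S, ?_⟩ (Set.mem_image_of_mem _ hmem)
      rintro y ⟨θ, hθ, rfl⟩; exact hub θ hθ
  refine ⟨?_, hmem, by rw [hsup, hval]⟩
  rw [hsup]
  have hA : Integrable
      (fun ω => (if (inner ℝ p (l ω) : ℝ) ≤ 0 then mL ω else 0) * (inner ℝ p (l ω) : ℝ)) P := by
    refine hmul _ (hsw mL 0 hmL measurable_const) ?_
    filter_upwards with ω
    split
    · exact (hC ω).1
    · simpa using hC0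
  have hB : Integrable
      (fun ω => (if 0 < (inner ℝ p (l ω) : ℝ) then mU ω else 0) * (inner ℝ p (l ω) : ℝ)) P := by
    have heq : (fun ω => if 0 < (inner ℝ p (l ω) : ℝ) then mU ω else 0)
        = fun ω => if (inner ℝ p (l ω) : ℝ) ≤ 0 then 0 else mU ω := by
      funext ω
      by_cases h : (inner ℝ p (l ω) : ℝ) ≤ 0
      · rw [if_neg (not_lt.mpr h), if_pos h]
      · rw [if_pos (not_le.mp h), if_neg h]
    refine hmul _ ?_ ?_
    · rw [heq]; exact hsw 0 mU measurable_const hmU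
    · filter_upwards with ω
      split
      · exact (hC ω).2
      · simpa using hC0
  rw [← integral_add hA hB]
  refine integral_congr_ae (Filter.Eventually.of_forall fun ω => ?_)
  unfold mSwitch
  dsimp only
  by_cases h : (inner ℝ p (l ω) : ℝ) ≤ 0
  · rw [if_pos h, if_pos h, if_neg (not_lt.mpr h)]; ring
  · rw [if_neg h, if_neg h, if_pos (not_le.mp h)]; ring
end

section
/- Let (Ω, 𝒜, P) be a probability space, l : Ω → ℝ^ℓ integrable, m_L ≤ m_U bounded measurable. Then the set Θ₀ = { E[m·l] : m measurable, m_L ≤ m ≤ m_U P-a.s. } is closed in ℝ^ℓ, hence compact (being also bounded and convex). -/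
open MeasureTheory
open scoped ENNReal RealInnerProductSpace

theorem stmt5_aux {Ω : Type*} [MeasurableSpace Ω] (P : Measure Ω) [IsProbabilityMeasure P]
    {ℓ : ℕ} (l : Ω → EuclideanSpace ℝ (Fin ℓ)) (hl : Integrable l P)
    (mL mU : Ω → ℝ) (hmL : Measurable mL) (hmU : Measurable mU)
    (C : ℝ) (hC : ∀ ω, |mL ω| ≤ C ∧ |mU ω| ≤ C) :
    IsCompact {θ : EuclideanSpace ℝ (Fin ℓ) |
      ∃ m : Ω → ℝ, Measurable m ∧ (∀ᵐ ω ∂P, mL ω ≤ m ω ∧ m ω ≤ mU ω) ∧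
        θ = ∫ ω, m ω • l ω ∂P} := by
  classical
  have hΩ : Nonempty Ω := by
    by_contra hΩ
    rw [not_nonempty_iff] at hΩ
    have h0 := measure_univ (μ := P)
    rw [Set.univ_eq_empty_iff.mpr hΩ, measure_empty] at h0
    exact zero_ne_one h0
  have hC0 : 0 ≤ C := le_trans (abs_nonneg _) (hC (Classical.arbitrary Ω)).1
  -- measurable version of l
  set g : Ω → EuclideanSpace ℝ (Fin ℓ) := hl.1.mk l with hg_def
  have hg_sm : StronglyMeasurable g := hl.1.stronglyMeasurable_mk
  have hlg : l =ᵐ[P] g := hl.1.ae_eq_mk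
  have hg_meas : Measurable g := hg_sm.measurable
  -- the tilted measure
  set w : Ω → ℝ := fun ω => 1 + ‖g ω‖ with hw_def
  have hw_pos : ∀ ω, 0 < w ω := fun ω => by positivity
  have hw_meas : Measurable w := measurable_const.add hg_meas.norm
  set μ : Measure Ω := P.withDensity (fun ω => ENNReal.ofReal (w ω)) with hμ_def
  have hwe_meas : Measurable fun ω => ENNReal.ofReal (w ω) := hw_meas.ennreal_ofReal
  haveI hμfin : IsFiniteMeasure μ := by
    constructor
    rw [hμ_def, withDensity_apply _ MeasurableSet.univ, setLIntegral_univ]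
    calc ∫⁻ ω, ENNReal.ofReal (w ω) ∂P
        = ∫⁻ ω, (1 + ‖g ω‖₊ : ℝ≥0∞) ∂P := by
          refine lintegral_congr fun ω => ?_
          rw [hw_def, ENNReal.ofReal_add zero_le_one (norm_nonneg _), ENNReal.ofReal_one,
            ofReal_norm, enorm_eq_nnnorm]
      _ = 1 + ∫⁻ ω, (‖g ω‖₊ : ℝ≥0∞) ∂P := by
          rw [lintegral_add_left measurable_const, lintegral_one, measure_univ]
      _ < ⊤ := ENNReal.add_lt_top.mpr ⟨ENNReal.one_lt_top, (hl.congr hlg).2⟩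
  -- transfer of a.e. statements between μ and P
  have hae : ∀ p : Ω → Prop, ((∀ᵐ ω ∂μ, p ω) ↔ ∀ᵐ ω ∂P, p ω) := by
    intro p
    rw [hμ_def, ae_withDensity_iff hwe_meas]
    constructor
    · intro h
      filter_upwards [h] with ω hω
      refine hω ?_
      simp only [ne_eq, ENNReal.ofReal_eq_zero, not_le]
      exact hw_pos ω
    · intro h
      filter_upwards [h] with ω hω _
      exact hω
  -- the normalized direction
  set u : Ω → EuclideanSpace ℝ (Fin ℓ) := fun ω => (w ω)⁻¹ • g ω with hu_def
  have hu_sm : StronglyMeasurable u := (hw_meas.inv.stronglyMeasurable).smul hg_sm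
  have hu_bdd : ∀ ω, ‖u ω‖ ≤ 1 := by
    intro ω
    rw [hu_def]
    simp only [norm_smul, norm_inv, Real.norm_eq_abs, abs_of_pos (hw_pos ω)]
    rw [← mul_le_mul_iff_right₀ (hw_pos ω), ← mul_assoc, mul_inv_cancel₀ (hw_pos ω).ne', one_mul,
      mul_one, hw_def]
    simp only
    linarith [norm_nonneg (g ω)]
  -- conversion of integrals
  have hconv : ∀ m : Ω → ℝ, ∫ ω, m ω • u ω ∂μ = ∫ ω, m ω • l ω ∂P := by
    intro m
    have hμ_eq : μ = P.withDensity (fun ω => ((w ω).toNNReal : ℝ≥0∞)) := rfl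
    rw [hμ_eq, integral_withDensity_eq_integral_smul hw_meas.real_toNNReal]
    refine integral_congr_ae ?_
    filter_upwards [hlg] with ω hω
    rw [NNReal.smul_def, Real.coe_toNNReal _ (hw_pos ω).le, hω, hu_def]
    simp only
    show (w ω) • (m ω • ((w ω)⁻¹ • g ω)) = m ω • g ω
    rw [smul_comm, smul_inv_smul₀ (hw_pos ω).ne']
  -- coordinates of u as L² elements
  have hui_meas : ∀ i, Measurable fun ω => u ω i := fun i =>
    (measurable_pi_apply i).comp ((WithLp.measurable_ofLp _ _).comp hu_sm.measurable)
  have hui_bdd : ∀ i ω, |u ω i| ≤ 1 := by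
    intro i ω
    refine le_trans ?_ (hu_bdd ω)
    have h1 : ⟪EuclideanSpace.single i (1:ℝ), u ω⟫ = u ω i := by
      rw [EuclideanSpace.inner_single_left]; simp
    calc |u ω i| = ‖⟪EuclideanSpace.single i (1:ℝ), u ω⟫‖ := by rw [h1, Real.norm_eq_abs]
      _ ≤ ‖EuclideanSpace.single i (1:ℝ)‖ * ‖u ω‖ := norm_inner_le_norm _ _
      _ = ‖u ω‖ := by rw [EuclideanSpace.norm_single]; simp
  have hui_mem : ∀ i, MemLp (fun ω => u ω i) 2 μ :=
    fun i => MemLp.of_bound (hui_meas i).aestronglyMeasurable 1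
      (ae_of_all _ fun ω => by simpa [Real.norm_eq_abs] using hui_bdd i ω)
  set U : Fin ℓ → Lp ℝ 2 μ := fun i => (hui_mem i).toLp _ with hU_def
  have hU_coe : ∀ i, ⇑(U i) =ᵐ[μ] fun ω => u ω i := fun i => MemLp.coeFn_toLp _
  -- the weak-star continuous evaluation map
  set Φ : WeakDual ℝ (Lp ℝ 2 μ) → EuclideanSpace ℝ (Fin ℓ) :=
    fun φ => (EuclideanSpace.equiv (Fin ℓ) ℝ).symm (fun i => φ (U i)) with hΦ_def
  have hΦcont : Continuous Φ :=
    (EuclideanSpace.equiv (Fin ℓ) ℝ).symm.continuous.comp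
      (continuous_pi fun i => WeakDual.eval_continuous (U i))
  have hΦ_apply : ∀ φ i, Φ φ i = φ (U i) := fun φ i => rfl
  -- the norm bound and the constraint set
  set R : ℝ := (μ Set.univ ^ (2:ℝ≥0∞).toReal⁻¹ * ENNReal.ofReal C).toReal with hR_def
  have hRbound_ne_top : μ Set.univ ^ (2:ℝ≥0∞).toReal⁻¹ * ENNReal.ofReal C ≠ ⊤ :=
    ENNReal.mul_ne_top (ENNReal.rpow_ne_top_of_nonneg (by positivity) (measure_ne_top μ _))
      ENNReal.ofReal_ne_top
  set K : Set (WeakDual ℝ (Lp ℝ 2 μ)) :=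
    {φ | ‖WeakDual.toStrongDual φ‖ ≤ R ∧ ∀ f : Lp ℝ 2 μ, (∀ᵐ ω ∂μ, 0 ≤ f ω) →
      (∫ ω, mL ω * f ω ∂μ) ≤ φ f ∧ φ f ≤ ∫ ω, mU ω * f ω ∂μ} with hK_def
  have hKclosed : IsClosed K := by
    have h2 : K = (WeakDual.toStrongDual ⁻¹' Metric.closedBall 0 R) ∩
        ⋂ (f : Lp ℝ 2 μ), ⋂ (_ : ∀ᵐ ω ∂μ, 0 ≤ f ω),
          (fun φ : WeakDual ℝ (Lp ℝ 2 μ) => φ f) ⁻¹'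
            Set.Icc (∫ ω, mL ω * f ω ∂μ) (∫ ω, mU ω * f ω ∂μ) := by
      ext φ
      simp only [hK_def, Set.mem_setOf_eq, Set.mem_inter_iff, Set.mem_preimage,
        mem_closedBall_zero_iff, Set.mem_iInter, Set.mem_Icc]
    rw [h2]
    exact (WeakDual.isClosed_closedBall 0 R).inter
      (isClosed_iInter fun f => isClosed_iInter fun _ =>
        IsClosed.preimage (WeakDual.eval_continuous f) isClosed_Icc)
  have hK_cpt : IsCompact K :=
    (WeakDual.isCompact_closedBall (0 : StrongDual ℝ (Lp ℝ 2 μ)) R).of_isClosed_subset hKclosed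
      (fun φ hφ => by simpa [mem_closedBall_zero_iff] using hφ.1)
  -- inner products as integrals
  have hinner : ∀ (h : Lp ℝ 2 μ) (m : Ω → ℝ), (⇑h =ᵐ[μ] m) →
      ∀ f : Lp ℝ 2 μ, ⟪h, f⟫ = ∫ ω, m ω * f ω ∂μ := by
    intro h m hm f
    rw [L2.inner_def]
    refine integral_congr_ae ?_
    filter_upwards [hm] with ω hω
    simp [RCLike.inner_apply, hω, mul_comm]
  -- integrability of bounded multiples of u
  have hint_int : ∀ m : Ω → ℝ, AEStronglyMeasurable m μ → (∀ᵐ ω ∂μ, |m ω| ≤ C) →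
      Integrable (fun ω => m ω • u ω) μ := by
    intro m hm hb
    refine Integrable.mono' (integrable_const C) (hm.smul hu_sm.aestronglyMeasurable) ?_
    filter_upwards [hb] with ω hω
    rw [norm_smul, Real.norm_eq_abs]
    calc |m ω| * ‖u ω‖ ≤ C * 1 :=
          mul_le_mul hω (hu_bdd ω) (norm_nonneg _) (le_trans (abs_nonneg _) hω)
      _ = C := mul_one C
  -- coordinates of the vector integral
  have hproj : ∀ (m : Ω → ℝ), Integrable (fun ω => m ω • u ω) μ → ∀ i,
      (∫ ω, m ω • u ω ∂μ) i = ∫ ω, m ω * u ω i ∂μ := by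
    intro m hint i
    have h2 := (EuclideanSpace.proj i (𝕜 := ℝ) (ι := Fin ℓ)).integral_comp_comm hint
    simp only [PiLp.proj_apply, PiLp.smul_apply, smul_eq_mul] at h2
    exact h2.symm
  -- the key evaluation identity
  have hcoord : ∀ (h : Lp ℝ 2 μ) (m : Ω → ℝ), AEStronglyMeasurable m μ → (⇑h =ᵐ[μ] m) →
      (∀ᵐ ω ∂μ, |m ω| ≤ C) →
      Φ (StrongDual.toWeakDual (InnerProductSpace.toDual ℝ (Lp ℝ 2 μ) h)) =
        ∫ ω, m ω • u ω ∂μ := by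
    intro h m hm hcoe hb
    have hint := hint_int m hm hb
    ext i
    rw [hΦ_apply]
    have h1 : (StrongDual.toWeakDual (InnerProductSpace.toDual ℝ (Lp ℝ 2 μ) h)) (U i)
        = ⟪h, U i⟫ := by
      exact InnerProductSpace.toDual_apply_apply (𝕜 := ℝ) (E := Lp ℝ 2 μ)
    rw [h1, hinner h m hcoe (U i), hproj m hint i]
    refine integral_congr_ae ?_
    filter_upwards [hU_coe i] with ω hω
    rw [hω]
  have heval : ∀ (h f : Lp ℝ 2 μ),
      (StrongDual.toWeakDual (InnerProductSpace.toDual ℝ (Lp ℝ 2 μ) h)) f = ⟪h, f⟫ :=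
    fun h f => InnerProductSpace.toDual_apply_apply (𝕜 := ℝ) (E := Lp ℝ 2 μ)
  have hfint : ∀ f : Lp ℝ 2 μ, Integrable (fun ω => C * |f ω|) μ :=
    fun f => (((Lp.memLp f).integrable one_le_two).abs).const_mul C
  have hprod_int : ∀ (m : Ω → ℝ), AEStronglyMeasurable m μ → (∀ᵐ ω ∂μ, |m ω| ≤ C) →
      ∀ f : Lp ℝ 2 μ, Integrable (fun ω => m ω * f ω) μ := by
    intro m hm hb f
    refine Integrable.mono' (hfint f) (hm.mul (Lp.aestronglyMeasurable f)) ?_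
    filter_upwards [hb] with ω hω
    rw [Real.norm_eq_abs, abs_mul]
    exact mul_le_mul_of_nonneg_right hω (abs_nonneg _)
  have hmL_abs : ∀ᵐ ω ∂μ, |mL ω| ≤ C := ae_of_all _ fun ω => (hC ω).1
  have hmU_abs : ∀ᵐ ω ∂μ, |mU ω| ≤ C := ae_of_all _ fun ω => (hC ω).2
  have hmLint : Integrable mL μ := Integrable.mono' (integrable_const C)
    hmL.aestronglyMeasurable (by simpa [Real.norm_eq_abs] using hmL_abs)
  have hmUint : Integrable mU μ := Integrable.mono' (integrable_const C)
    hmU.aestronglyMeasurable (by simpa [Real.norm_eq_abs] using hmU_abs)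
  -- comparison lemma by testing against indicators
  have hcmp : ∀ (m₁ m₂ : Ω → ℝ), Measurable m₁ → Measurable m₂ →
      Integrable m₁ μ → Integrable m₂ μ →
      (∀ f : Lp ℝ 2 μ, (∀ᵐ ω ∂μ, 0 ≤ f ω) →
        ∫ ω, m₁ ω * f ω ∂μ ≤ ∫ ω, m₂ ω * f ω ∂μ) →
      ∀ᵐ ω ∂μ, m₁ ω ≤ m₂ ω := by
    intro m₁ m₂ hm₁ hm₂ hint₁ hint₂ hcond
    have hA_meas : MeasurableSet {ω | m₂ ω < m₁ ω} := measurableSet_lt hm₂ hm₁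
    set A := {ω | m₂ ω < m₁ ω} with hA_def
    have hA0 : μ A = 0 := by
      by_contra hA
      set f : Lp ℝ 2 μ := indicatorConstLp 2 hA_meas (measure_ne_top μ A) (1:ℝ) with hf_def
      have hf_coe : ⇑f =ᵐ[μ] A.indicator (fun _ => (1:ℝ)) := indicatorConstLp_coeFn
      have hf_nonneg : ∀ᵐ ω ∂μ, 0 ≤ f ω := by
        filter_upwards [hf_coe] with ω hω
        rw [hω]
        exact Set.indicator_nonneg (fun _ _ => zero_le_one) ω
      have key := hcond f hf_nonneg
      have hrw : ∀ m : Ω → ℝ, ∫ ω, m ω * f ω ∂μ = ∫ ω in A, m ω ∂μ := by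
        intro m
        rw [← integral_indicator hA_meas]
        refine integral_congr_ae ?_
        filter_upwards [hf_coe] with ω hω
        rw [hω]
        by_cases hmem : ω ∈ A
        · simp [Set.indicator_of_mem hmem]
        · simp [Set.indicator_of_notMem hmem]
      rw [hrw m₁, hrw m₂] at key
      have hsub : A ⊆ Function.support fun ω => m₁ ω - m₂ ω := fun ω hω => by
        simp only [Function.mem_support]
        exact sub_ne_zero_of_ne (ne_of_gt hω)
      have h1 : 0 ≤ᵐ[μ.restrict A] fun ω => m₁ ω - m₂ ω :=
        (ae_restrict_iff' hA_meas).mpr (ae_of_all _ fun ω hω => sub_nonneg.mpr hω.le)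
      have h2 : IntegrableOn (fun ω => m₁ ω - m₂ ω) A μ := (hint₁.sub hint₂).integrableOn
      have hpos' : 0 < ∫ ω in A, (m₁ ω - m₂ ω) ∂μ :=
        (setIntegral_pos_iff_support_of_nonneg_ae h1 h2).mpr
          (by
            rw [Set.inter_eq_right.mpr hsub]
            exact lt_of_le_of_ne zero_le (Ne.symm hA))
      rw [integral_sub hint₁.integrableOn hint₂.integrableOn] at hpos'
      linarith
    rw [ae_iff]
    simpa only [not_le] using hA0
  -- the identified set is the image of K
  suffices hS : {θ : EuclideanSpace ℝ (Fin ℓ) |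
      ∃ m : Ω → ℝ, Measurable m ∧ (∀ᵐ ω ∂P, mL ω ≤ m ω ∧ m ω ≤ mU ω) ∧
        θ = ∫ ω, m ω • l ω ∂P} = Φ '' K by
    rw [hS]
    exact hK_cpt.image hΦcont
  apply Set.Subset.antisymm
  · rintro θ ⟨m, hm_meas, hm_bdd, rfl⟩
    have hm_bddμ : ∀ᵐ ω ∂μ, mL ω ≤ m ω ∧ m ω ≤ mU ω := (hae _).mpr hm_bdd
    have habs : ∀ᵐ ω ∂μ, |m ω| ≤ C := by
      filter_upwards [hm_bddμ] with ω hω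
      rcases abs_le.mp (hC ω).1 with ⟨ha1, _⟩
      rcases abs_le.mp (hC ω).2 with ⟨_, ha4⟩
      exact abs_le.mpr ⟨by linarith [hω.1], by linarith [hω.2]⟩
    have hmem : MemLp m 2 μ := MemLp.of_bound hm_meas.aestronglyMeasurable C
      (by simpa [Real.norm_eq_abs] using habs)
    refine ⟨StrongDual.toWeakDual (InnerProductSpace.toDual ℝ (Lp ℝ 2 μ) (hmem.toLp m)),
      ⟨?_, ?_⟩, ?_⟩
    · have e1 : WeakDual.toStrongDual (StrongDual.toWeakDual
          (InnerProductSpace.toDual ℝ (Lp ℝ 2 μ) (hmem.toLp m)))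
          = InnerProductSpace.toDual ℝ (Lp ℝ 2 μ) (hmem.toLp m) := rfl
      rw [e1, (InnerProductSpace.toDual ℝ (Lp ℝ 2 μ)).norm_map, Lp.norm_toLp, hR_def]
      exact ENNReal.toReal_mono hRbound_ne_top
        (eLpNorm_le_of_ae_bound (by simpa [Real.norm_eq_abs] using habs))
    · intro f hf
      have hev : (StrongDual.toWeakDual (InnerProductSpace.toDual ℝ (Lp ℝ 2 μ)
          (hmem.toLp m))) f = ∫ ω, m ω * f ω ∂μ := by
        rw [heval, hinner (hmem.toLp m) m (MemLp.coeFn_toLp hmem) f]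
      rw [hev]
      constructor
      · refine integral_mono_ae (hprod_int mL hmL.aestronglyMeasurable hmL_abs f)
          (hprod_int m hm_meas.aestronglyMeasurable habs f) ?_
        filter_upwards [hf, hm_bddμ] with ω h0 hb
        exact mul_le_mul_of_nonneg_right hb.1 h0
      · refine integral_mono_ae (hprod_int m hm_meas.aestronglyMeasurable habs f)
          (hprod_int mU hmU.aestronglyMeasurable hmU_abs f) ?_
        filter_upwards [hf, hm_bddμ] with ω h0 hb
        exact mul_le_mul_of_nonneg_right hb.2 h0
    · exact (hcoord (hmem.toLp m) m hm_meas.aestronglyMeasurable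
        (MemLp.coeFn_toLp hmem) habs).trans (hconv m)
  · rintro θ ⟨φ, ⟨hφnorm, hφc⟩, rfl⟩
    set h : Lp ℝ 2 μ := (InnerProductSpace.toDual ℝ (Lp ℝ 2 μ)).symm
      (WeakDual.toStrongDual φ) with hh_def
    have hφh : StrongDual.toWeakDual (InnerProductSpace.toDual ℝ (Lp ℝ 2 μ) h) = φ := by
      rw [hh_def, LinearIsometryEquiv.apply_symm_apply]
      rfl
    set m0 : Ω → ℝ := (Lp.aestronglyMeasurable h).mk h with hm0_def
    have hm0_sm : StronglyMeasurable m0 := (Lp.aestronglyMeasurable h).stronglyMeasurable_mk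
    have hcoe : ⇑h =ᵐ[μ] m0 := (Lp.aestronglyMeasurable h).ae_eq_mk
    have hm0_meas : Measurable m0 := hm0_sm.measurable
    have hm0_int : Integrable m0 μ := ((Lp.memLp h).integrable one_le_two).congr hcoe
    have heval0 : ∀ f : Lp ℝ 2 μ, φ f = ∫ ω, m0 ω * f ω ∂μ := by
      intro f
      rw [← hφh, heval, hinner h m0 hcoe f]
    have hlow : ∀ᵐ ω ∂μ, mL ω ≤ m0 ω :=
      hcmp mL m0 hmL hm0_meas hmLint hm0_int
        (fun f hf => by rw [← heval0 f]; exact (hφc f hf).1)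
    have hupp : ∀ᵐ ω ∂μ, m0 ω ≤ mU ω :=
      hcmp m0 mU hm0_meas hmU hm0_int hmUint
        (fun f hf => by rw [← heval0 f]; exact (hφc f hf).2)
    have habs : ∀ᵐ ω ∂μ, |m0 ω| ≤ C := by
      filter_upwards [hlow, hupp] with ω h1 h2
      rcases abs_le.mp (hC ω).1 with ⟨ha1, _⟩
      rcases abs_le.mp (hC ω).2 with ⟨_, ha4⟩
      exact abs_le.mpr ⟨by linarith, by linarith⟩
    refine ⟨m0, hm0_meas, (hae _).mp ?_, ?_⟩
    · filter_upwards [hlow, hupp] with ω h1 h2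
      exact ⟨h1, h2⟩
    · rw [← hconv m0, ← hcoord h m0 hm0_sm.aestronglyMeasurable hcoe habs, hφh]

/-- The identified set `Θ₀` is closed, hence compact. -/
theorem stmt5 {Ω : Type*} [MeasurableSpace Ω] (P : Measure Ω) [IsProbabilityMeasure P]
    {ℓ : ℕ} (l : Ω → EuclideanSpace ℝ (Fin ℓ)) (hl : Integrable l P)
    (mL mU : Ω → ℝ) (hmL : Measurable mL) (hmU : Measurable mU)
    (hle : ∀ᵐ ω ∂P, mL ω ≤ mU ω)
    (hbdd : ∃ C : ℝ, ∀ ω, |mL ω| ≤ C ∧ |mU ω| ≤ C) :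
    IsClosed {θ : EuclideanSpace ℝ (Fin ℓ) |
      ∃ m : Ω → ℝ, Measurable m ∧ (∀ᵐ ω ∂P, mL ω ≤ m ω ∧ m ω ≤ mU ω) ∧
        θ = ∫ ω, m ω • l ω ∂P} ∧
    IsCompact {θ : EuclideanSpace ℝ (Fin ℓ) |
      ∃ m : Ω → ℝ, Measurable m ∧ (∀ᵐ ω ∂P, mL ω ≤ m ω ∧ m ω ≤ mU ω) ∧
        θ = ∫ ω, m ω • l ω ∂P} := by
  obtain ⟨C, hC⟩ := hbdd
  have hcpt := stmt5_aux P l hl mL mU hmL hmU C hC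
  exact ⟨hcpt.isClosed, hcpt⟩
end

section
/- Let ξ : Ω → ℝ^ℓ satisfy E‖ξ‖² < ∞ and suppose P(⟨p, ξ⟩ = 0) = 0 for every p ∈ ℝ^ℓ \ {0}. Then the map ζ(p) = E[1{⟨p, ξ⟩ ≥ 0} ⟨p, ξ⟩] is differentiable at every p ∈ ℝ^ℓ \ {0} with gradient ∇ζ(p) = E[ξ · 1{⟨p, ξ⟩ ≥ 0}]. -/
open MeasureTheory Filter Asymptotics

/-- Differentiability of `ζ(p) = E[1{⟨p,ξ⟩ ≥ 0} ⟨p,ξ⟩]` with gradient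
`E[ξ 1{⟨p,ξ⟩ ≥ 0}]` at every `p ≠ 0`. -/
theorem stmt6 {Ω : Type*} [MeasurableSpace Ω] (P : Measure Ω) [IsProbabilityMeasure P]
    {ℓ : ℕ} (ξ : Ω → EuclideanSpace ℝ (Fin ℓ)) (hmeas : Measurable ξ)
    (hL2 : Integrable (fun ω => ‖ξ ω‖ ^ 2) P)
    (hzero : ∀ p : EuclideanSpace ℝ (Fin ℓ), p ≠ 0 →
      P {ω | (inner ℝ p (ξ ω) : ℝ) = 0} = 0)
    (p : EuclideanSpace ℝ (Fin ℓ)) (hp : p ≠ 0) :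
    HasGradientAt
      (fun q : EuclideanSpace ℝ (Fin ℓ) =>
        ∫ ω, (if 0 ≤ (inner ℝ q (ξ ω) : ℝ) then (inner ℝ q (ξ ω) : ℝ) else 0) ∂P)
      (∫ ω, (if 0 ≤ (inner ℝ p (ξ ω) : ℝ) then (1 : ℝ) else 0) • ξ ω ∂P) p := by
  classical
  set ind : EuclideanSpace ℝ (Fin ℓ) → Ω → ℝ :=
    fun q ω => if 0 ≤ (inner ℝ q (ξ ω) : ℝ) then (1 : ℝ) else 0 with hind
  have hinner : ∀ q : EuclideanSpace ℝ (Fin ℓ),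
      Measurable (fun ω => (inner ℝ q (ξ ω) : ℝ)) :=
    fun q => measurable_const.inner hmeas
  have hindmeas : ∀ q, Measurable (ind q) := by
    intro q
    exact Measurable.ite (measurableSet_le measurable_const (hinner q))
      measurable_const measurable_const
  have hindbd : ∀ q ω, |ind q ω - ind p ω| ≤ 1 := by
    intro q ω
    simp only [hind]
    split_ifs <;> simp
  -- ‖ξ‖ is integrable
  have hnorm : Integrable (fun ω => ‖ξ ω‖) P := by
    refine Integrable.mono ((integrable_const (1:ℝ)).add hL2)
      hmeas.norm.aestronglyMeasurable ?_
    filter_upwards with ω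
    have h1 : (0:ℝ) ≤ ‖ξ ω‖ := norm_nonneg _
    simp only [Pi.add_apply, Real.norm_eq_abs]
    rw [abs_of_nonneg h1, abs_of_nonneg (by positivity : (0:ℝ) ≤ 1 + ‖ξ ω‖ ^ 2)]
    nlinarith [sq_nonneg (‖ξ ω‖ - 1)]
  -- integrand integrability for any q
  have hfint : ∀ q : EuclideanSpace ℝ (Fin ℓ),
      Integrable (fun ω => (if 0 ≤ (inner ℝ q (ξ ω) : ℝ) then (inner ℝ q (ξ ω) : ℝ) else 0)) P := by
    intro q
    refine Integrable.mono (hnorm.const_mul ‖q‖)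
      (Measurable.aestronglyMeasurable ?_) ?_
    · exact Measurable.ite (measurableSet_le measurable_const (hinner q)) (hinner q)
        measurable_const
    · filter_upwards with ω
      rw [Real.norm_eq_abs, Real.norm_eq_abs, abs_of_nonneg (by positivity : (0:ℝ) ≤ ‖q‖ * ‖ξ ω‖)]
      split_ifs
      · exact abs_real_inner_le_norm q (ξ ω)
      · simpa using (by positivity : (0:ℝ) ≤ ‖q‖ * ‖ξ ω‖)
  -- the vector integrand is integrable
  have hvint : Integrable (fun ω => ind p ω • ξ ω) P := by
    refine Integrable.mono hnorm
      (((hindmeas p).smul hmeas).aestronglyMeasurable) ?_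
    filter_upwards with ω
    rw [norm_smul, Real.norm_eq_abs, norm_norm]
    have : |ind p ω| ≤ 1 := by simp only [hind]; split_ifs <;> simp
    nlinarith [norm_nonneg (ξ ω), abs_nonneg (ind p ω)]
  -- integrability of |ind q - ind p| * ‖ξ‖
  have hdint : ∀ q, Integrable (fun ω => |ind q ω - ind p ω| * ‖ξ ω‖) P := by
    intro q
    refine Integrable.mono hnorm
      (Measurable.aestronglyMeasurable ?_) ?_
    · exact (((hindmeas q).sub (hindmeas p)).abs).mul hmeas.norm
    · filter_upwards with ω
      rw [Real.norm_eq_abs, norm_norm,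
        abs_of_nonneg (by positivity : (0:ℝ) ≤ |ind q ω - ind p ω| * ‖ξ ω‖)]
      nlinarith [hindbd q ω, norm_nonneg (ξ ω), abs_nonneg (ind q ω - ind p ω)]
  -- integrability of ind p * ⟪q - p, ξ⟫
  have hgint : ∀ q : EuclideanSpace ℝ (Fin ℓ),
      Integrable (fun ω => ind p ω * (inner ℝ (q - p) (ξ ω) : ℝ)) P := by
    intro q
    refine Integrable.mono (hnorm.const_mul ‖q - p‖)
      (Measurable.aestronglyMeasurable ((hindmeas p).mul (hinner (q - p)))) ?_
    filter_upwards with ω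
    rw [Real.norm_eq_abs, Real.norm_eq_abs,
      abs_of_nonneg (by positivity : (0:ℝ) ≤ ‖q - p‖ * ‖ξ ω‖), abs_mul]
    have h1 : |ind p ω| ≤ 1 := by simp only [hind]; split_ifs <;> simp
    have h2 := abs_real_inner_le_norm (q - p) (ξ ω)
    nlinarith [abs_nonneg ((inner ℝ (q - p) (ξ ω) : ℝ)), abs_nonneg (ind p ω)]
  -- the key identity
  have key : ∀ q : EuclideanSpace ℝ (Fin ℓ),
      (∫ ω, (if 0 ≤ (inner ℝ q (ξ ω) : ℝ) then (inner ℝ q (ξ ω) : ℝ) else 0) ∂P)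
        - (∫ ω, (if 0 ≤ (inner ℝ p (ξ ω) : ℝ) then (inner ℝ p (ξ ω) : ℝ) else 0) ∂P)
        - (inner ℝ (∫ ω, ind p ω • ξ ω ∂P) (q - p) : ℝ)
      = ∫ ω, (ind q ω - ind p ω) * (inner ℝ q (ξ ω) : ℝ) ∂P := by
    intro q
    have h1 : (inner ℝ (∫ ω, ind p ω • ξ ω ∂P) (q - p) : ℝ)
        = ∫ ω, ind p ω * (inner ℝ (q - p) (ξ ω) : ℝ) ∂P := by
      rw [real_inner_comm, ← integral_inner hvint (q - p)]
      congr 1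
      ext ω
      rw [real_inner_smul_right]
    have hsubint : Integrable (fun ω =>
        (if 0 ≤ (inner ℝ q (ξ ω) : ℝ) then (inner ℝ q (ξ ω) : ℝ) else 0)
        - (if 0 ≤ (inner ℝ p (ξ ω) : ℝ) then (inner ℝ p (ξ ω) : ℝ) else 0)) P :=
      (hfint q).sub (hfint p)
    rw [h1, ← integral_sub (hfint q) (hfint p), ← integral_sub hsubint (hgint q)]
    congr 1
    ext ω
    have hsub : (inner ℝ (q - p) (ξ ω) : ℝ) = (inner ℝ q (ξ ω) : ℝ) - (inner ℝ p (ξ ω) : ℝ) :=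
      inner_sub_left q p (ξ ω)
    simp only [hind, hsub]
    split_ifs <;> ring
  -- pointwise bound
  have hptbd : ∀ (q : EuclideanSpace ℝ (Fin ℓ)) (ω : Ω),
      ‖(ind q ω - ind p ω) * (inner ℝ q (ξ ω) : ℝ)‖
        ≤ ‖q - p‖ * (|ind q ω - ind p ω| * ‖ξ ω‖) := by
    intro q ω
    have hsub : (inner ℝ (q - p) (ξ ω) : ℝ) = (inner ℝ q (ξ ω) : ℝ) - (inner ℝ p (ξ ω) : ℝ) :=
      inner_sub_left q p (ξ ω)
    have h2 : |(inner ℝ (q - p) (ξ ω) : ℝ)| ≤ ‖q - p‖ * ‖ξ ω‖ := abs_real_inner_le_norm _ _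
    rw [Real.norm_eq_abs, abs_mul]
    simp only [hind]
    split_ifs with h3 h4 h4
    · simp
    · -- ind q = 1, ind p = 0 : 0 ≤ ⟪q,ξ⟫, ⟪p,ξ⟫ < 0
      have : |(inner ℝ q (ξ ω) : ℝ)| ≤ |(inner ℝ (q - p) (ξ ω) : ℝ)| := by
        rw [hsub, abs_of_nonneg h3, abs_of_nonneg (by linarith [lt_of_not_ge h4])]
        linarith [lt_of_not_ge h4]
      simp only [sub_zero, abs_one, one_mul]
      exact le_trans this h2
    · -- ind q = 0, ind p = 1 : ⟪q,ξ⟫ < 0 ≤ ⟪p,ξ⟫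
      have : |(inner ℝ q (ξ ω) : ℝ)| ≤ |(inner ℝ (q - p) (ξ ω) : ℝ)| := by
        rw [hsub, abs_of_neg (lt_of_not_ge h3), abs_of_nonpos (by linarith [lt_of_not_ge h3])]
        linarith
      simp only [zero_sub, abs_neg, abs_one, one_mul]
      exact le_trans this h2
    · simp
  -- the error integrand is integrable
  have heint : ∀ q : EuclideanSpace ℝ (Fin ℓ),
      Integrable (fun ω => (ind q ω - ind p ω) * (inner ℝ q (ξ ω) : ℝ)) P := by
    intro q
    refine Integrable.mono ((hdint q).const_mul ‖q - p‖)
      (Measurable.aestronglyMeasurable (((hindmeas q).sub (hindmeas p)).mul (hinner q))) ?_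
    filter_upwards with ω
    rw [Real.norm_eq_abs (‖q - p‖ * _),
      abs_of_nonneg (by positivity : (0:ℝ) ≤ ‖q - p‖ * (|ind q ω - ind p ω| * ‖ξ ω‖))]
    exact hptbd q ω
  -- the L¹ distance of indicators tends to 0
  have hH : Tendsto (fun q => ∫ ω, |ind q ω - ind p ω| * ‖ξ ω‖ ∂P) (nhds p) (nhds 0) := by
    have := tendsto_integral_filter_of_dominated_convergence
      (μ := P) (l := nhds p)
      (F := fun q ω => |ind q ω - ind p ω| * ‖ξ ω‖) (f := fun _ => (0:ℝ))
      (bound := fun ω => ‖ξ ω‖)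
      (Eventually.of_forall fun q => (hdint q).aestronglyMeasurable)
      (Eventually.of_forall fun q => by
        filter_upwards with ω
        rw [Real.norm_eq_abs,
          abs_of_nonneg (by positivity : (0:ℝ) ≤ |ind q ω - ind p ω| * ‖ξ ω‖)]
        nlinarith [hindbd q ω, norm_nonneg (ξ ω), abs_nonneg (ind q ω - ind p ω)])
      hnorm ?_
    · simpa using this
    · -- a.e. pointwise convergence
      have hae : ∀ᵐ ω ∂P, (inner ℝ p (ξ ω) : ℝ) ≠ 0 := by
        rw [ae_iff]
        simpa using hzero p hp
      filter_upwards [hae] with ω hω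
      have hcont : Continuous (fun q : EuclideanSpace ℝ (Fin ℓ) => (inner ℝ q (ξ ω) : ℝ)) :=
        continuous_id.inner continuous_const
      have hev : ∀ᶠ q in nhds p, |ind q ω - ind p ω| * ‖ξ ω‖ = 0 := by
        rcases hω.lt_or_gt with hlt | hgt
        · have : ∀ᶠ q in nhds p, (inner ℝ q (ξ ω) : ℝ) < 0 :=
            (hcont.continuousAt (x := p)).eventually_lt_const hlt
          filter_upwards [this] with q hq
          simp only [hind, if_neg (not_le.mpr hq), if_neg (not_le.mpr hlt)]
          simp
        · have : ∀ᶠ q in nhds p, 0 < (inner ℝ q (ξ ω) : ℝ) :=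
            (hcont.continuousAt (x := p)).eventually_const_lt hgt
          filter_upwards [this] with q hq
          simp only [hind, if_pos hq.le, if_pos hgt.le]
          simp
      exact Tendsto.congr' (hev.mono fun q hq => hq.symm) tendsto_const_nhds
  -- conclusion
  rw [hasGradientAt_iff_isLittleO, isLittleO_iff]
  intro c hc
  have hev : ∀ᶠ q in nhds p, ∫ ω, |ind q ω - ind p ω| * ‖ξ ω‖ ∂P ≤ c := by
    exact hH.eventually_le_const hc
  filter_upwards [hev] with q hq
  rw [key q]
  calc ‖∫ ω, (ind q ω - ind p ω) * (inner ℝ q (ξ ω) : ℝ) ∂P‖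
      ≤ ∫ ω, ‖(ind q ω - ind p ω) * (inner ℝ q (ξ ω) : ℝ)‖ ∂P :=
        norm_integral_le_integral_norm _
    _ ≤ ∫ ω, ‖q - p‖ * (|ind q ω - ind p ω| * ‖ξ ω‖) ∂P := by
        refine integral_mono_of_nonneg (Eventually.of_forall fun ω => norm_nonneg _)
          ((hdint q).const_mul ‖q - p‖) (Eventually.of_forall fun ω => hptbd q ω)
    _ = ‖q - p‖ * ∫ ω, |ind q ω - ind p ω| * ‖ξ ω‖ ∂P := integral_const_mul _ _
    _ ≤ ‖q - p‖ * c := by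
        exact mul_le_mul_of_nonneg_left hq (norm_nonneg _)
    _ = c * ‖q - p‖ := mul_comm _ _
end

section
/- Let Θ₀ ⊆ ℝ^ℓ be the compact convex set Θ₀ = {E[m·l] : m measurable, m_L ≤ m ≤ m_U P-a.s.} with l integrable and m_L ≤ m_U bounded measurable. Then for the j-th coordinate, the projection {θ^{(j)} : θ ∈ Θ₀} equals the interval [θ_L^{(j)}, θ_U^{(j)}] where θ_L^{(j)} = E[(1{l^{(j)} > 0} m_L + 1{l^{(j)} ≤ 0} m_U) l^{(j)}] and θ_U^{(j)} = E[(1{l^{(j)} ≤ 0} m_L + 1{l^{(j)} > 0} m_U) l^{(j)}]. -/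
open MeasureTheory

/-- The projection of the identified set `Θ₀` onto its `j`-th coordinate is
the closed interval `[θ_L⁽ʲ⁾, θ_U⁽ʲ⁾]` with endpoints given by the
sign-switching formulas. -/
theorem stmt14 {Ω : Type*} [MeasurableSpace Ω] (P : Measure Ω) [IsProbabilityMeasure P]
    {ℓ : ℕ} (l : Ω → EuclideanSpace ℝ (Fin ℓ)) (hl : Integrable l P)
    (mL mU : Ω → ℝ) (hmL : Measurable mL) (hmU : Measurable mU)
    (hle : ∀ᵐ ω ∂P, mL ω ≤ mU ω)
    (hbdd : ∃ C : ℝ, ∀ ω, |mL ω| ≤ C ∧ |mU ω| ≤ C)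
    (j : Fin ℓ) :
    (fun θ : EuclideanSpace ℝ (Fin ℓ) => θ j) ''
        {θ : EuclideanSpace ℝ (Fin ℓ) |
          ∃ m : Ω → ℝ, Measurable m ∧ (∀ᵐ ω ∂P, mL ω ≤ m ω ∧ m ω ≤ mU ω) ∧
            θ = ∫ ω, m ω • l ω ∂P} =
      Set.Icc
        (∫ ω, (if 0 < l ω j then mL ω else mU ω) * l ω j ∂P)
        (∫ ω, (if l ω j ≤ 0 then mL ω else mU ω) * l ω j ∂P) := by
  obtain ⟨C₀, hC₀⟩ := hbdd
  set C : ℝ := max C₀ 0 with hCdef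
  have hC : ∀ ω, |mL ω| ≤ C ∧ |mU ω| ≤ C := fun ω =>
    ⟨(hC₀ ω).1.trans (le_max_left _ _), (hC₀ ω).2.trans (le_max_left _ _)⟩
  have hC0 : 0 ≤ C := le_max_right _ _
  -- integrability of the j-th coordinate of l
  have hlj : Integrable (fun ω => l ω j) P := by
    have := (EuclideanSpace.proj (𝕜 := ℝ) j).integrable_comp hl
    simpa using this
  -- key: integrability of m * l_j for a.e.-bounded a.e.-measurable m
  have key : ∀ m : Ω → ℝ, AEMeasurable m P → (∀ᵐ ω ∂P, |m ω| ≤ C) →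
      Integrable (fun ω => m ω * l ω j) P := by
    intro m hm hmb
    refine Integrable.mono' (hlj.norm.const_mul C)
      (hm.aestronglyMeasurable.mul hlj.aestronglyMeasurable) ?_
    filter_upwards [hmb] with ω hω
    rw [norm_mul]
    exact mul_le_mul_of_nonneg_right hω (norm_nonneg _)
  -- key: integrability of m • l
  have keyv : ∀ m : Ω → ℝ, AEMeasurable m P → (∀ᵐ ω ∂P, |m ω| ≤ C) →
      Integrable (fun ω => m ω • l ω) P := by
    intro m hm hmb
    refine Integrable.mono' (hl.norm.const_mul C)
      (hm.aestronglyMeasurable.smul hl.aestronglyMeasurable) ?_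
    filter_upwards [hmb] with ω hω
    rw [norm_smul]
    exact mul_le_mul_of_nonneg_right hω (norm_nonneg _)
  -- a.e. bound on any admissible m
  have bnd : ∀ m : Ω → ℝ, (∀ᵐ ω ∂P, mL ω ≤ m ω ∧ m ω ≤ mU ω) →
      (∀ᵐ ω ∂P, |m ω| ≤ C) := by
    intro m hm
    filter_upwards [hm] with ω ⟨h1, h2⟩
    rw [abs_le]
    constructor
    · exact le_trans (neg_le_of_abs_le (hC ω).1) h1
    · exact h2.trans (le_of_abs_le (hC ω).2)
  -- measurable representative of l_j
  obtain ⟨u, hu, huae⟩ : ∃ u : Ω → ℝ, Measurable u ∧ (fun ω => l ω j) =ᵐ[P] u := by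
    obtain ⟨g, hg, hgl⟩ := hlj.aemeasurable
    exact ⟨g, hg, hgl⟩
  -- the two extremal selections
  set m0 : Ω → ℝ := fun ω => if 0 < u ω then mL ω else mU ω with hm0def
  set m1 : Ω → ℝ := fun ω => if u ω ≤ 0 then mL ω else mU ω with hm1def
  have hm0meas : Measurable m0 := Measurable.ite (measurableSet_lt measurable_const hu) hmL hmU
  have hm1meas : Measurable m1 := Measurable.ite (measurableSet_le hu measurable_const) hmL hmU
  have hm0b : ∀ᵐ ω ∂P, mL ω ≤ m0 ω ∧ m0 ω ≤ mU ω := by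
    filter_upwards [hle] with ω hω
    simp only [hm0def]; split_ifs <;> exact ⟨by linarith, by linarith⟩
  have hm1b : ∀ᵐ ω ∂P, mL ω ≤ m1 ω ∧ m1 ω ≤ mU ω := by
    filter_upwards [hle] with ω hω
    simp only [hm1def]; split_ifs <;> exact ⟨by linarith, by linarith⟩
  -- the endpoint integrals equal the m0/m1 integrals
  have hint0 : Integrable (fun ω => m0 ω * l ω j) P :=
    key m0 hm0meas.aemeasurable (bnd m0 hm0b)
  have hint1 : Integrable (fun ω => m1 ω * l ω j) P :=
    key m1 hm1meas.aemeasurable (bnd m1 hm1b)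
  have hcongr0 : (fun ω => (if 0 < l ω j then mL ω else mU ω) * l ω j)
      =ᵐ[P] (fun ω => m0 ω * l ω j) := by
    filter_upwards [huae] with ω hω
    simp only [hm0def, hω]
  have hcongr1 : (fun ω => (if l ω j ≤ 0 then mL ω else mU ω) * l ω j)
      =ᵐ[P] (fun ω => m1 ω * l ω j) := by
    filter_upwards [huae] with ω hω
    simp only [hm1def, hω]
  have heq0 : (∫ ω, (if 0 < l ω j then mL ω else mU ω) * l ω j ∂P)
      = ∫ ω, m0 ω * l ω j ∂P := integral_congr_ae hcongr0
  have heq1 : (∫ ω, (if l ω j ≤ 0 then mL ω else mU ω) * l ω j ∂P)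
      = ∫ ω, m1 ω * l ω j ∂P := integral_congr_ae hcongr1
  set θL : ℝ := ∫ ω, m0 ω * l ω j ∂P with hθL
  set θU : ℝ := ∫ ω, m1 ω * l ω j ∂P with hθU
  rw [heq0, heq1]
  -- pointwise inequalities
  have ptwise : ∀ (m : Ω → ℝ) ω, mL ω ≤ m ω → m ω ≤ mU ω → l ω j = u ω →
      m0 ω * l ω j ≤ m ω * l ω j ∧ m ω * l ω j ≤ m1 ω * l ω j := by
    intro m ω h1 h2 heq
    simp only [hm0def, hm1def, ← heq]
    rcases lt_or_ge 0 (l ω j) with h | h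
    · rw [if_pos h, if_neg (not_le.mpr h)]
      exact ⟨mul_le_mul_of_nonneg_right h1 h.le, mul_le_mul_of_nonneg_right h2 h.le⟩
    · rw [if_neg (not_lt.mpr h), if_pos h]
      exact ⟨mul_le_mul_of_nonpos_right h2 h, mul_le_mul_of_nonpos_right h1 h⟩
  ext x
  simp only [Set.mem_image, Set.mem_setOf_eq, Set.mem_Icc]
  constructor
  · rintro ⟨θ, ⟨m, hmmeas, hmb, rfl⟩, rfl⟩
    have hmC := bnd m hmb
    have hintm : Integrable (fun ω => m ω * l ω j) P := key m hmmeas.aemeasurable hmC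
    have hproj : (∫ ω, m ω • l ω ∂P) j = ∫ ω, m ω * l ω j ∂P := by
      have := (EuclideanSpace.proj (𝕜 := ℝ) j).integral_comp_comm
        (keyv m hmmeas.aemeasurable hmC)
      simpa using this.symm
    rw [hproj]
    constructor
    · refine integral_mono_ae hint0 hintm ?_
      filter_upwards [hmb, huae] with ω ⟨h1, h2⟩ heq
      exact (ptwise m ω h1 h2 heq).1
    · refine integral_mono_ae hintm hint1 ?_
      filter_upwards [hmb, huae] with ω ⟨h1, h2⟩ heq
      exact (ptwise m ω h1 h2 heq).2
  · rintro ⟨hxl, hxu⟩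
    set s : ℝ := if θU - θL = 0 then 0 else (x - θL) / (θU - θL) with hsdef
    have hθLU : θL ≤ θU := le_trans hxl hxu
    have hs0 : 0 ≤ s := by
      rw [hsdef]; split_ifs with h
      · exact le_refl 0
      · have hpos : 0 < θU - θL := lt_of_le_of_ne (by linarith) (fun he => h he.symm)
        exact div_nonneg (by linarith) hpos.le
    have hs1 : s ≤ 1 := by
      rw [hsdef]; split_ifs with h
      · norm_num
      · have hpos : 0 < θU - θL := lt_of_le_of_ne (by linarith) (fun he => h he.symm)
        rw [div_le_one hpos]
        linarith
    have hsx : θL + s * (θU - θL) = x := by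
      rw [hsdef]; split_ifs with h
      · have : θU = θL := by linarith
        rw [this] at hxu
        linarith [hxl, hxu]
      · field_simp; ring
    set m : Ω → ℝ := fun ω => (1 - s) * m0 ω + s * m1 ω with hmdef
    have hmmeas : Measurable m := (hm0meas.const_mul _).add (hm1meas.const_mul _)
    have hmb : ∀ᵐ ω ∂P, mL ω ≤ m ω ∧ m ω ≤ mU ω := by
      filter_upwards [hm0b, hm1b] with ω ⟨h01, h02⟩ ⟨h11, h12⟩
      simp only [hmdef]
      constructor <;> nlinarith
    have hintm : Integrable (fun ω => m ω * l ω j) P :=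
      key m hmmeas.aemeasurable (bnd m hmb)
    refine ⟨∫ ω, m ω • l ω ∂P, ⟨m, hmmeas, hmb, rfl⟩, ?_⟩
    have hproj : (∫ ω, m ω • l ω ∂P) j = ∫ ω, m ω * l ω j ∂P := by
      have := (EuclideanSpace.proj (𝕜 := ℝ) j).integral_comp_comm
        (keyv m hmmeas.aemeasurable (bnd m hmb))
      simpa using this.symm
    rw [hproj]
    have hexp : (fun ω => m ω * l ω j)
        = fun ω => (1 - s) * (m0 ω * l ω j) + s * (m1 ω * l ω j) := by
      funext ω; simp only [hmdef]; ring
    rw [hexp, integral_add ((hint0.const_mul _)) ((hint1.const_mul _)),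
      integral_const_mul, integral_const_mul]
    rw [← hθL, ← hθU]
    linarith [hsx]
end
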